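/- The interval score U(r, l, θ) = (r − l) + (2/α)(l − θ)𝟙(θ < l) + (2/α)(θ − r)𝟙(θ > r) is uniquely minimized in expectation by the pair of true quantiles: if p is a continuous, strictly positive density on ℝ with α/2 quantile l_p and 1−α/2 quantile r_p, then E_{θ∼p} U(r_p, l_p, θ) ≤ E_{θ∼p} U(r, l, θ) for all l ≤ r, with equality iff (r, l) = (r_p, l_p). -/

import Mathlib

open MeasureTheory Set intervalIntegral Metric

namespace IntervalScoreAux

/-- Integrability of the left-tail penalty. -/
lemma intG {p : ℝ → ℝ} (hc : Continuous p) (hpos : ∀ x, 0 < p x)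
    (hint : Integrable p) (hmom : Integrable (fun x => x * p x)) (l : ℝ) :
    Integrable (fun θ => max (l - θ) 0 * p θ) := by
  have habs : Integrable (fun x => |x| * p x) := by
    have := hmom.abs
    simpa only [abs_mul, fun x => abs_of_pos (hpos x)] using this
  have hb : Integrable (fun θ => |l| * p θ + |θ| * p θ) := (hint.const_mul _).add habs
  refine hb.mono' (((continuous_const.sub continuous_id).max continuous_const).mul hc
    |>.aestronglyMeasurable) ?_
  filter_upwards with θ
  have hp := (hpos θ).le
  rw [Real.norm_eq_abs, abs_mul, abs_of_pos (hpos θ), abs_of_nonneg (le_max_right _ _)]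
  have h1 : max (l - θ) 0 ≤ |l| + |θ| := by
    refine max_le ?_ (by positivity)
    have := le_abs_self l
    have := neg_abs_le θ
    linarith
  nlinarith

/-- Integrability of the right-tail penalty. -/
lemma intH {p : ℝ → ℝ} (hc : Continuous p) (hpos : ∀ x, 0 < p x)
    (hint : Integrable p) (hmom : Integrable (fun x => x * p x)) (r : ℝ) :
    Integrable (fun θ => max (θ - r) 0 * p θ) := by
  have habs : Integrable (fun x => |x| * p x) := by
    have := hmom.abs
    simpa only [abs_mul, fun x => abs_of_pos (hpos x)] using this
  have hb : Integrable (fun θ => |θ| * p θ + |r| * p θ) := habs.add (hint.const_mul _)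
  refine hb.mono' (((continuous_id.sub continuous_const).max continuous_const).mul hc
    |>.aestronglyMeasurable) ?_
  filter_upwards with θ
  have hp := (hpos θ).le
  rw [Real.norm_eq_abs, abs_mul, abs_of_pos (hpos θ), abs_of_nonneg (le_max_right _ _)]
  have h1 : max (θ - r) 0 ≤ |θ| + |r| := by
    refine max_le ?_ (by positivity)
    have := le_abs_self θ
    have := neg_abs_le r
    linarith
  nlinarith

/-- FTC: the CDF has derivative `p`. -/
lemma hasDerivAt_cdf {p : ℝ → ℝ} (hc : Continuous p) (hint : Integrable p) (t : ℝ) :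
    HasDerivAt (fun u => ∫ x in Iic u, p x) (p t) t := by
  have heq : (fun u => ∫ x in Iic u, p x)
      = fun u => (∫ x in Iic (0:ℝ), p x) + ∫ x in (0:ℝ)..u, p x := by
    funext u
    rw [← intervalIntegral.integral_Iic_sub_Iic hint.integrableOn hint.integrableOn]
    ring
  rw [heq]
  exact (intervalIntegral.integral_hasDerivAt_right hint.intervalIntegrable
    (hc.stronglyMeasurableAtFilter _ _) hc.continuousAt).const_add _

lemma ae_ne (x₀ : ℝ) : ∀ᵐ θ : ℝ, θ ≠ x₀ := by
  rw [ae_iff]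
  have : {θ : ℝ | ¬θ ≠ x₀} = {x₀} := by ext θ; simp
  rw [this]
  exact measure_singleton x₀

/-- Derivative of the expected left penalty. -/
lemma hasDerivAt_G {p : ℝ → ℝ} (hc : Continuous p) (hpos : ∀ x, 0 < p x)
    (hint : Integrable p) (hmom : Integrable (fun x => x * p x)) (x₀ : ℝ) :
    HasDerivAt (fun l => ∫ θ, max (l - θ) 0 * p θ) (∫ x in Iic x₀, p x) x₀ := by
  have key := hasDerivAt_integral_of_dominated_loc_of_lip
    (F := fun x θ => max (x - θ) 0 * p θ) (F' := (Iio x₀).indicator p)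
    (bound := p) (x₀ := x₀) (μ := volume) Filter.univ_mem
    (Filter.Eventually.of_forall fun x =>
      (((continuous_const.sub continuous_id).max continuous_const).mul hc).aestronglyMeasurable)
    (intG hc hpos hint hmom x₀)
    (hc.aestronglyMeasurable.indicator measurableSet_Iio)
    ?_ hint ?_
  · have h2 := key.2
    rwa [MeasureTheory.integral_indicator measurableSet_Iio, ← integral_Iic_eq_integral_Iio] at h2
  · filter_upwards with θ
    refine LipschitzWith.lipschitzOnWith ?_
    refine LipschitzWith.of_dist_le_mul fun a b => ?_
    rw [Real.dist_eq, Real.dist_eq, Real.coe_nnabs, ← sub_mul, abs_mul]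
    have h1 : |max (a - θ) 0 - max (b - θ) 0| ≤ |a - b| := by
      have := abs_max_sub_max_le_abs (a - θ) (b - θ) 0
      simpa using this
    calc |max (a - θ) 0 - max (b - θ) 0| * |p θ| ≤ |a - b| * |p θ| :=
          mul_le_mul_of_nonneg_right h1 (abs_nonneg _)
      _ = |p θ| * |a - b| := mul_comm _ _
  · filter_upwards [ae_ne x₀] with θ hθ
    rcases lt_or_gt_of_ne hθ with h | h
    · -- θ < x₀ : near x₀ the function is (x - θ) * p θ
      have hval : (Iio x₀).indicator p θ = p θ := by
        simp [Set.indicator_of_mem (Set.mem_Iio.2 h)]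
      rw [hval]
      have hd : HasDerivAt (fun x => (x - θ) * p θ) (p θ) x₀ := by
        simpa using ((hasDerivAt_id x₀).sub_const θ).mul_const (p θ)
      refine hd.congr_of_eventuallyEq ?_
      filter_upwards [Ioi_mem_nhds h] with x hx
      rw [max_eq_left (by simp [Set.mem_Ioi] at hx; linarith)]
    · -- x₀ < θ : near x₀ the function is 0
      have hval : (Iio x₀).indicator p θ = 0 := by
        simp [Set.indicator_of_notMem (by simp [Set.mem_Iio]; exact h.le : θ ∉ Iio x₀)]
      rw [hval]
      refine (hasDerivAt_const x₀ (0:ℝ)).congr_of_eventuallyEq ?_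
      filter_upwards [Iio_mem_nhds h] with x hx
      rw [max_eq_right (by simp [Set.mem_Iio] at hx; linarith), zero_mul]

/-- Derivative of the expected right penalty. -/
lemma hasDerivAt_H {p : ℝ → ℝ} (hc : Continuous p) (hpos : ∀ x, 0 < p x)
    (hint : Integrable p) (hnorm : ∫ x, p x = 1)
    (hmom : Integrable (fun x => x * p x)) (x₀ : ℝ) :
    HasDerivAt (fun r => ∫ θ, max (θ - r) 0 * p θ) ((∫ x in Iic x₀, p x) - 1) x₀ := by
  have key := hasDerivAt_integral_of_dominated_loc_of_lip
    (F := fun x θ => max (θ - x) 0 * p θ) (F' := fun θ => -((Ioi x₀).indicator p θ))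
    (bound := p) (x₀ := x₀) (μ := volume) Filter.univ_mem
    (Filter.Eventually.of_forall fun x =>
      (((continuous_id.sub continuous_const).max continuous_const).mul hc).aestronglyMeasurable)
    (intH hc hpos hint hmom x₀)
    ((hc.aestronglyMeasurable.indicator measurableSet_Ioi).neg)
    ?_ hint ?_
  · have h2 := key.2
    rw [MeasureTheory.integral_neg, MeasureTheory.integral_indicator measurableSet_Ioi] at h2
    have hsplit : (∫ x in Iic x₀, p x) + ∫ x in Ioi x₀, p x = 1 := by
      rw [intervalIntegral.integral_Iic_add_Ioi hint.integrableOn hint.integrableOn, hnorm]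
    have : -∫ x in Ioi x₀, p x = (∫ x in Iic x₀, p x) - 1 := by linarith
    rwa [this] at h2
  · filter_upwards with θ
    refine LipschitzWith.lipschitzOnWith ?_
    refine LipschitzWith.of_dist_le_mul fun a b => ?_
    rw [Real.dist_eq, Real.dist_eq, Real.coe_nnabs, ← sub_mul, abs_mul]
    have h1 : |max (θ - a) 0 - max (θ - b) 0| ≤ |a - b| := by
      have := abs_max_sub_max_le_abs (θ - a) (θ - b) 0
      have h2 : |θ - a - (θ - b)| = |a - b| := by
        rw [show θ - a - (θ - b) = -(a - b) by ring, abs_neg]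
      rw [h2] at this
      simpa using this
    calc |max (θ - a) 0 - max (θ - b) 0| * |p θ| ≤ |a - b| * |p θ| :=
          mul_le_mul_of_nonneg_right h1 (abs_nonneg _)
      _ = |p θ| * |a - b| := mul_comm _ _
  · filter_upwards [ae_ne x₀] with θ hθ
    rcases lt_or_gt_of_ne hθ with h | h
    · -- θ < x₀ : near x₀ the function is 0
      have hval : -((Ioi x₀).indicator p θ) = 0 := by
        simp [Set.indicator_of_notMem (by simp [Set.mem_Ioi]; exact h.le : θ ∉ Ioi x₀)]
      rw [hval]
      refine (hasDerivAt_const x₀ (0:ℝ)).congr_of_eventuallyEq ?_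
      filter_upwards [Ioi_mem_nhds h] with x hx
      rw [max_eq_right (by simp [Set.mem_Ioi] at hx; linarith), zero_mul]
    · -- x₀ < θ : near x₀ the function is (θ - x) * p θ
      have hval : -((Ioi x₀).indicator p θ) = -p θ := by
        simp [Set.indicator_of_mem (Set.mem_Ioi.2 h)]
      rw [hval]
      have hd : HasDerivAt (fun x => (θ - x) * p θ) (-p θ) x₀ := by
        simpa using ((hasDerivAt_const x₀ θ).sub (hasDerivAt_id x₀)).mul_const (p θ)
      refine hd.congr_of_eventuallyEq ?_
      filter_upwards [Iio_mem_nhds h] with x hx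
      rw [max_eq_left (by simp [Set.mem_Iio] at hx; linarith)]

/-- Sign of the interval integral of a strictly monotone continuous function vanishing at `a`. -/
lemma integral_sign {φ : ℝ → ℝ} (hφc : Continuous φ) (hm : StrictMono φ) {a : ℝ}
    (ha : φ a = 0) (b : ℝ) :
    0 ≤ (∫ t in a..b, φ t) ∧ (b ≠ a → 0 < ∫ t in a..b, φ t) := by
  rcases lt_trichotomy a b with h | h | h
  · have hp : 0 < ∫ t in a..b, φ t :=
      intervalIntegral_pos_of_pos_on (hφc.intervalIntegrable _ _)
        (fun x hx => ha ▸ hm hx.1) h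
    exact ⟨hp.le, fun _ => hp⟩
  · subst h; simp
  · have hp : 0 < ∫ t in b..a, (fun t => -φ t) t :=
      intervalIntegral_pos_of_pos_on (hφc.neg.intervalIntegrable _ _)
        (fun x hx => by
          have : φ x < 0 := ha ▸ hm hx.2
          simpa using this) h
    rw [intervalIntegral.integral_neg] at hp
    rw [intervalIntegral.integral_symm]
    exact ⟨by linarith, fun _ => by linarith⟩

end IntervalScoreAux

/-- The interval score
`U(r, l, θ) = (r - l) + (2/α)(l - θ)𝟙(θ < l) + (2/α)(θ - r)𝟙(θ > r)`
is uniquely minimized in expectation by the pair of true quantiles `(r_p, l_p)`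
of a continuous, strictly positive density `p`, where `P(l_p) = α/2` and
`P(r_p) = 1 - α/2`. -/
theorem interval_score_uniquely_minimized
    (p : ℝ → ℝ) (hc : Continuous p) (hpos : ∀ x, 0 < p x)
    (hint : Integrable p) (hnorm : ∫ x, p x = 1)
    (hmom : Integrable (fun x => x * p x))
    (α : ℝ) (hα : α ∈ Set.Ioo (0:ℝ) 1)
    (lp rp : ℝ)
    (hlp : ∫ x in Set.Iic lp, p x = α / 2)
    (hrp : ∫ x in Set.Iic rp, p x = 1 - α / 2)
    (l r : ℝ) (hlr : l ≤ r) :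
    (∫ θ, ((rp - lp) + (2 / α) * (if θ < lp then lp - θ else 0)
        + (2 / α) * (if rp < θ then θ - rp else 0)) * p θ
      ≤ ∫ θ, ((r - l) + (2 / α) * (if θ < l then l - θ else 0)
        + (2 / α) * (if r < θ then θ - r else 0)) * p θ)
    ∧ ((∫ θ, ((rp - lp) + (2 / α) * (if θ < lp then lp - θ else 0)
        + (2 / α) * (if rp < θ then θ - rp else 0)) * p θ
      = ∫ θ, ((r - l) + (2 / α) * (if θ < l then l - θ else 0)
        + (2 / α) * (if r < θ then θ - r else 0)) * p θ)
        ↔ (r = rp ∧ l = lp)) := by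
  classical
  have hα0 : (0:ℝ) < α := hα.1
  have hα' : α ≠ 0 := ne_of_gt hα0
  have h2α : (0:ℝ) < 2 / α := by positivity
  -- CDF
  set P : ℝ → ℝ := fun t => ∫ x in Set.Iic t, p x with hP
  have hPderiv : ∀ t, HasDerivAt P (p t) t := IntervalScoreAux.hasDerivAt_cdf hc hint
  have hPcont : Continuous P :=
    continuous_iff_continuousAt.2 fun t => (hPderiv t).continuousAt
  have hPmono : StrictMono P := by
    intro a b hab
    have h1 : P b - P a = ∫ t in a..b, p t :=
      intervalIntegral.integral_Iic_sub_Iic hint.integrableOn hint.integrableOn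
    have h2 : 0 < ∫ t in a..b, p t :=
      intervalIntegral_pos_of_pos (hint.intervalIntegrable) hpos hab
    linarith
  -- expected penalties
  set G : ℝ → ℝ := fun c => ∫ θ, max (c - θ) 0 * p θ with hGdef
  set H : ℝ → ℝ := fun c => ∫ θ, max (θ - c) 0 * p θ with hHdef
  have hGd : ∀ t, HasDerivAt G (P t) t := fun t =>
    IntervalScoreAux.hasDerivAt_G hc hpos hint hmom t
  have hHd : ∀ t, HasDerivAt H (P t - 1) t := fun t =>
    IntervalScoreAux.hasDerivAt_H hc hpos hint hnorm hmom t
  have hGsub : ∀ a b : ℝ, (∫ t in a..b, P t) = G b - G a := fun a b =>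
    intervalIntegral.integral_eq_sub_of_hasDerivAt (fun t _ => hGd t)
      (hPcont.intervalIntegrable _ _)
  have hHsub : ∀ a b : ℝ, (∫ t in a..b, (P t - 1)) = H b - H a := fun a b =>
    intervalIntegral.integral_eq_sub_of_hasDerivAt (fun t _ => hHd t)
      ((hPcont.sub continuous_const).intervalIntegrable _ _)
  -- rewriting the score integrals
  have hif1 : ∀ (c θ : ℝ), (if θ < c then c - θ else 0) = max (c - θ) 0 := by
    intro c θ
    split
    · rw [max_eq_left]; linarith
    · rw [max_eq_right]; linarith
  have hif2 : ∀ (c θ : ℝ), (if c < θ then θ - c else 0) = max (θ - c) 0 := by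
    intro c θ
    split
    · rw [max_eq_left]; linarith
    · rw [max_eq_right]; linarith
  have hexp : ∀ a b : ℝ,
      (∫ θ, ((b - a) + (2 / α) * (if θ < a then a - θ else 0)
        + (2 / α) * (if b < θ then θ - b else 0)) * p θ)
      = (b - a) + (2 / α) * G a + (2 / α) * H b := by
    intro a b
    have h1 : Integrable (fun θ => (b - a) * p θ) := hint.const_mul _
    have h2 : Integrable (fun θ => (2 / α) * (max (a - θ) 0 * p θ)) :=
      (IntervalScoreAux.intG hc hpos hint hmom a).const_mul _
    have h3 : Integrable (fun θ => (2 / α) * (max (θ - b) 0 * p θ)) :=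
      (IntervalScoreAux.intH hc hpos hint hmom b).const_mul _
    have h23 : Integrable (fun θ => (2 / α) * (max (a - θ) 0 * p θ)
        + (2 / α) * (max (θ - b) 0 * p θ)) := h2.add h3
    have heq : (fun θ => ((b - a) + (2 / α) * (if θ < a then a - θ else 0)
        + (2 / α) * (if b < θ then θ - b else 0)) * p θ)
        = fun θ => (b - a) * p θ + ((2 / α) * (max (a - θ) 0 * p θ)
          + (2 / α) * (max (θ - b) 0 * p θ)) := by
      funext θ
      rw [hif1, hif2]
      ring
    rw [heq, MeasureTheory.integral_add h1 h23, MeasureTheory.integral_add h2 h3,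
      MeasureTheory.integral_const_mul, MeasureTheory.integral_const_mul, MeasureTheory.integral_const_mul, hnorm]
    simp only [hGdef, hHdef]
    ring
  rw [hexp lp rp, hexp l r]
  -- the two quantile integrals
  set I1 : ℝ := ∫ t in lp..l, (P t - α / 2) with hI1def
  set I2 : ℝ := ∫ t in rp..r, (P t - (1 - α / 2)) with hI2def
  have hsign1 := IntervalScoreAux.integral_sign (φ := fun t => P t - α / 2) (hPcont.sub continuous_const)
    (fun a b hab => sub_lt_sub_right (hPmono hab) _)
    (a := lp) (by simp [hP, hlp] : P lp - α / 2 = 0) l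
  have hsign2 := IntervalScoreAux.integral_sign (φ := fun t => P t - (1 - α / 2)) (hPcont.sub continuous_const)
    (fun a b hab => sub_lt_sub_right (hPmono hab) _)
    (a := rp) (by simp [hP, hrp] : P rp - (1 - α / 2) = 0) r
  -- algebraic identity for the difference
  have e1 : I1 = (G l - G lp) - α / 2 * (l - lp) := by
    rw [hI1def, intervalIntegral.integral_sub (hPcont.intervalIntegrable _ _)
      intervalIntegrable_const, intervalIntegral.integral_const, hGsub]
    simp [smul_eq_mul]
    ring
  have e2 : I2 = (H r - H rp) + α / 2 * (r - rp) := by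
    have hcongr : (∫ t in rp..r, (P t - (1 - α / 2)))
        = ∫ t in rp..r, ((P t - 1) + α / 2) := by
      apply intervalIntegral.integral_congr
      intro t _
      ring
    rw [hI2def, hcongr, intervalIntegral.integral_add (f := fun t => P t - 1)
      ((hPcont.sub continuous_const).intervalIntegrable _ _) intervalIntegrable_const,
      intervalIntegral.integral_const, hHsub]
    simp [smul_eq_mul]
    ring
  have hdiff : ((r - l) + (2 / α) * G l + (2 / α) * H r)
      - ((rp - lp) + (2 / α) * G lp + (2 / α) * H rp) = (2 / α) * (I1 + I2) := by
    rw [e1, e2]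
    field_simp
    ring
  constructor
  · nlinarith [hsign1.1, hsign2.1, mul_nonneg h2α.le (add_nonneg hsign1.1 hsign2.1)]
  · constructor
    · intro heq
      have hz : (2 / α) * (I1 + I2) = 0 := by linarith
      have hsum : I1 + I2 = 0 := by
        rcases mul_eq_zero.1 hz with h | h
        · exact absurd h (ne_of_gt h2α)
        · exact h
      constructor
      · by_contra hr'
        have := hsign2.2 hr'
        linarith [hsign1.1]
      · by_contra hl'
        have := hsign1.2 hl'
        linarith [hsign2.1]
    · rintro ⟨hr', hl'⟩
      subst hr'; subst hl'
      rfl
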